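/- The entropy decrease of a split satisfies Δ := H(q) - sum_j p_j H(p^j) ≥ (M^2 / (8(M(1-2γ)+2γ))) * J^2, provided every p_j ≤ (M(1-2γ)+2γ)/M. -/

import Mathlib

open Real

private lemma hasDerivAt_F {y : ℝ} (hy : y ≠ 0) :
    HasDerivAt (fun y : ℝ => (4*y+4) * Real.log y - 8*y + 8)
      (4 * Real.log y + (4*y+4) * y⁻¹ - 8) y := by
  have ha : HasDerivAt (fun y : ℝ => 4*y+4) 4 y := by
    simpa using ((hasDerivAt_id y).const_mul (4:ℝ)).add_const 4
  have h1 : HasDerivAt (fun y : ℝ => (4*y+4) * Real.log y)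
      (4 * Real.log y + (4*y+4) * y⁻¹) y := by
    exact ha.mul (Real.hasDerivAt_log hy)
  have h2 : HasDerivAt (fun y : ℝ => 8*y) 8 y := by
    simpa using (hasDerivAt_id y).const_mul (8:ℝ)
  simpa using (h1.sub h2).add_const 8

private lemma F_mono {a b : ℝ} (ha : 0 < a) (hab : a ≤ b) :
    (4*a+4) * Real.log a - 8*a + 8 ≤ (4*b+4) * Real.log b - 8*b + 8 := by
  set F := fun y : ℝ => (4*y+4) * Real.log y - 8*y + 8 with hF
  have key : MonotoneOn F (Set.Icc a b) := by
    apply monotoneOn_of_deriv_nonneg (convex_Icc a b)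
    · intro y hy
      exact (hasDerivAt_F (by rintro rfl; exact absurd hy.1 (by linarith) )).continuousAt.continuousWithinAt
    · intro y hy
      rw [interior_Icc] at hy
      exact (hasDerivAt_F (by rintro rfl; exact absurd hy.1 (by linarith))).differentiableAt.differentiableWithinAt
    · intro y hy
      rw [interior_Icc] at hy
      have hy0 : 0 < y := lt_trans ha hy.1
      rw [(hasDerivAt_F hy0.ne').deriv]
      have hlog : 1 - y⁻¹ ≤ Real.log y := Real.one_sub_inv_le_log_of_pos hy0
      have hinv : (4*y+4) * y⁻¹ = 4 + 4*y⁻¹ := by field_simp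
      rw [hinv]; linarith
  exact key (Set.left_mem_Icc.2 hab) (Set.right_mem_Icc.2 hab) hab

private lemma key_ineq {x : ℝ} (hx : 0 ≤ x) :
    3*(x-1)^2 ≤ 2*(x+2)*(x*Real.log x - x + 1) := by
  rcases eq_or_lt_of_le hx with rfl | hx0
  · simp [Real.log_zero]; norm_num
  set f := fun y : ℝ => 2*(y+2)*(y*Real.log y - y + 1) - 3*(y-1)^2 with hfdef
  have hderiv : ∀ y : ℝ, y ≠ 0 → HasDerivAt f ((4*y+4) * Real.log y - 8*y + 8) y := by
    intro y hy
    have hml : HasDerivAt (fun y : ℝ => y * Real.log y - y + 1) (Real.log y + 1 - 1) y :=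
      ((Real.hasDerivAt_mul_log hy).sub (hasDerivAt_id y)).add_const 1
    have hc : HasDerivAt (fun y : ℝ => 2*(y+2)) 2 y := by
      simpa using ((hasDerivAt_id y).add_const (2:ℝ)).const_mul (2:ℝ)
    have hprod : HasDerivAt (fun y : ℝ => 2*(y+2)*(y*Real.log y - y + 1))
        (2*(y*Real.log y - y + 1) + 2*(y+2)*(Real.log y + 1 - 1)) y := hc.mul hml
    have hsq : HasDerivAt (fun y : ℝ => 3*(y-1)^2) (3*(2*(y-1))) y := by
      simpa using (((hasDerivAt_id y).sub_const (1:ℝ)).pow 2).const_mul (3:ℝ)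
    have := hprod.sub hsq
    exact this.congr_deriv (by ring)
  have hf1 : f 1 = 0 := by simp [hfdef]
  have hgoal : 0 ≤ f x := by
    rcases le_total x 1 with hx1 | hx1
    · -- f antitone on [x,1]
      have hanti : AntitoneOn f (Set.Icc x 1) := by
        apply antitoneOn_of_deriv_nonpos (convex_Icc x 1)
        · intro y hy
          exact (hderiv y (by rintro rfl; exact absurd hy.1 (by linarith))).continuousAt.continuousWithinAt
        · intro y hy
          rw [interior_Icc] at hy
          exact (hderiv y (by rintro rfl; exact absurd hy.1 (by linarith))).differentiableAt.differentiableWithinAt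
        · intro y hy
          rw [interior_Icc] at hy
          have hy0 : 0 < y := lt_trans hx0 hy.1
          rw [(hderiv y hy0.ne').deriv]
          have := F_mono hy0 (le_of_lt hy.2)
          simpa using this.trans_eq (by norm_num [Real.log_one])
      have := hanti (Set.left_mem_Icc.2 hx1) (Set.right_mem_Icc.2 hx1) hx1
      rw [hf1] at this; exact this
    · have hmono : MonotoneOn f (Set.Icc 1 x) := by
        apply monotoneOn_of_deriv_nonneg (convex_Icc 1 x)
        · intro y hy
          exact (hderiv y (by rintro rfl; exact absurd hy.1 (by linarith))).continuousAt.continuousWithinAt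
        · intro y hy
          rw [interior_Icc] at hy
          exact (hderiv y (by rintro rfl; exact absurd hy.1 (by linarith))).differentiableAt.differentiableWithinAt
        · intro y hy
          rw [interior_Icc] at hy
          have hy1 : (1:ℝ) < y := hy.1
          rw [(hderiv y (by linarith)).deriv]
          have := F_mono one_pos (le_of_lt hy1)
          simpa [Real.log_one] using this
      have := hmono (Set.left_mem_Icc.2 hx1) (Set.right_mem_Icc.2 hx1) hx1
      rw [hf1] at this; exact this
  have : f x = 2*(x+2)*(x*Real.log x - x + 1) - 3*(x-1)^2 := rfl
  linarith [hgoal.trans_eq this]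

private lemma ptwise {a b : ℝ} (ha : 0 ≤ a) (hb : 0 ≤ b) (hab : b = 0 → a = 0) :
    a - b + 3*(a-b)^2/(2*(a+2*b)) ≤ a * Real.log (a/b) := by
  rcases eq_or_lt_of_le hb with rfl | hb0
  · simp [hab rfl]
  · have key := key_ineq (x := a/b) (div_nonneg ha hb0.le)
    have hb2 : (0:ℝ) < b^2 := by positivity
    have hmul := mul_le_mul_of_nonneg_left key hb2.le
    have hA : b^2*(3*((a/b)-1)^2) = 3*(a-b)^2 := by field_simp
    have hB : b^2*(2*((a/b)+2)*((a/b)*Real.log (a/b) - (a/b) + 1))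
        = 2*(a+2*b)*(a*Real.log (a/b) - a + b) := by field_simp
    rw [hA, hB] at hmul
    have hpos : (0:ℝ) < 2*(a+2*b) := by linarith
    have h3 : 3*(a-b)^2/(2*(a+2*b)) ≤ a*Real.log (a/b) - a + b := by
      rw [div_le_iff₀ hpos]; nlinarith [hmul]
    linarith

private lemma pinsker {n : ℕ} (a b : Fin n → ℝ) (ha : ∀ i, 0 ≤ a i) (hb : ∀ i, 0 ≤ b i)
    (ha1 : ∑ i, a i = 1) (hb1 : ∑ i, b i = 1) (hab : ∀ i, b i = 0 → a i = 0) :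
    (∑ i, |a i - b i|)^2 ≤ 2 * ∑ i, a i * Real.log (a i / b i) := by
  have hC := Finset.sum_sq_le_sum_mul_sum_of_sq_eq_mul Finset.univ
      (r := fun i => |a i - b i|)
      (f := fun i => 3*(a i - b i)^2/(2*(a i + 2*b i)))
      (g := fun i => (2/3)*(a i + 2*b i))
      (fun i _ => div_nonneg (by positivity) (by have := ha i; have := hb i; linarith))
      (fun i _ => by have := ha i; have := hb i; positivity)
      (fun i _ => by
        rcases eq_or_lt_of_le (by have := ha i; have := hb i; linarith :
            (0:ℝ) ≤ a i + 2*b i) with h | h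
        · have hbi : b i = 0 := by have := ha i; have := hb i; linarith
          have hai : a i = 0 := hab i hbi
          simp [hai, hbi]
        · rw [sq_abs]; field_simp; rw [mul_div_cancel_right₀ _ (by linarith)])
  have hgsum : ∑ i, (2/3)*(a i + 2*b i) = 2 := by
    rw [← Finset.mul_sum, Finset.sum_add_distrib, ha1, ← Finset.mul_sum, hb1]
    norm_num
  rw [hgsum] at hC
  have hfle : ∑ i, 3*(a i - b i)^2/(2*(a i + 2*b i)) ≤ ∑ i, a i * Real.log (a i / b i) := by
    have h0 : ∑ i, (a i - b i) = 0 := by rw [Finset.sum_sub_distrib, ha1, hb1]; ring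
    have hs := Finset.sum_le_sum (fun i (_ : i ∈ Finset.univ) =>
      ptwise (ha i) (hb i) (hab i))
    rw [Finset.sum_add_distrib, h0] at hs
    linarith
  calc (∑ i, |a i - b i|)^2 ≤ (∑ i, 3*(a i - b i)^2/(2*(a i + 2*b i))) * 2 := hC
    _ ≤ (∑ i, a i * Real.log (a i / b i)) * 2 := by linarith
    _ = 2 * ∑ i, a i * Real.log (a i / b i) := by ring

/-- The entropy decrease of a split satisfies
`Δ := H(q) - ∑ j, p_j H(p^j) ≥ (M² / (8(M(1-2γ)+2γ))) J²`, provided every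
`p_j ≤ (M(1-2γ)+2γ)/M`. -/
theorem stmt9 (M K : ℕ) (hM : 2 ≤ M) (hK : 2 ≤ K)
    (q : Fin K → ℝ) (hq : ∀ i, 0 ≤ q i) (hq1 : ∑ i, q i = 1)
    (p : Fin K → Fin M → ℝ) (hp : ∀ i j, 0 ≤ p i j) (hp1 : ∀ i, ∑ j, p i j = 1)
    (pj : Fin M → ℝ) (hpj : ∀ j, pj j = ∑ i, q i * p i j)
    (hpjpos : ∀ j, 0 < pj j)
    (γ : ℝ) (hγ0 : 0 < γ) (hγ1 : γ < 1)
    (hub : ∀ j, pj j ≤ (M * (1 - 2 * γ) + 2 * γ) / M)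
    (pc : Fin M → Fin K → ℝ) (hpc : ∀ j i, pc j i = q i * p i j / pj j)
    (H : (Fin K → ℝ) → ℝ)
    (hH : ∀ v, H v = ∑ i, v i * Real.log (1 / v i))
    (J : ℝ) (hJ : J = (2 / M) * ∑ j, ∑ i, q i * |pj j - p i j|) :
    (M ^ 2 / (8 * (M * (1 - 2 * γ) + 2 * γ))) * J ^ 2 ≤
      H q - ∑ j, pj j * H (pc j) := by
  have hMpos : (0:ℝ) < M := by
    have : (2:ℝ) ≤ M := by exact_mod_cast hM
    linarith
  set c : ℝ := M*(1-2*γ)+2*γ with hc_def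
  have j0 : Fin M := ⟨0, by omega⟩
  have hcpos : 0 < c := by
    have h1 : 0 < c/M := lt_of_lt_of_le (hpjpos j0) (hub j0)
    have := mul_pos h1 hMpos
    rwa [div_mul_cancel₀ _ (ne_of_gt hMpos)] at this
  have hpc_nonneg : ∀ j i, 0 ≤ pc j i := fun j i => by
    rw [hpc]; exact div_nonneg (mul_nonneg (hq i) (hp i j)) (hpjpos j).le
  have hpc_sum : ∀ j, ∑ i, pc j i = 1 := fun j => by
    simp only [hpc]
    rw [← Finset.sum_div, ← hpj j, div_self (hpjpos j).ne']
  have hpc_zero : ∀ j i, q i = 0 → pc j i = 0 := fun j i h => by simp [hpc, h]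
  set KL : Fin M → ℝ := fun j => ∑ i, pc j i * Real.log (pc j i / q i) with hKL_def
  -- the chain-rule identity : H q - ∑ pj H (pc j) = ∑ pj KL j
  have hterm : ∀ (i : Fin K) (j : Fin M),
      pj j * (pc j i * Real.log (1 / pc j i)) + pj j * (pc j i * Real.log (pc j i / q i))
        = q i * p i j * Real.log (1 / q i) := by
    intro i j
    rw [hpc]
    rcases eq_or_lt_of_le (mul_nonneg (hq i) (hp i j)) with h0 | hpos
    · rw [← h0]; simp
    · have hqi : q i ≠ 0 := fun h => by simp [h] at hpos
      have ht : 0 < q i * p i j / pj j := div_pos hpos (hpjpos j)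
      have hlog : Real.log (1/(q i * p i j / pj j)) + Real.log ((q i * p i j / pj j) / q i)
          = Real.log (1 / q i) := by
        rw [one_div, Real.log_inv, Real.log_div ht.ne' hqi, one_div, Real.log_inv]; ring
      have hpt : pj j * (q i * p i j / pj j) = q i * p i j := by
        rw [mul_div_assoc']
        exact mul_div_cancel_left₀ _ (hpjpos j).ne'
      calc pj j * ((q i * p i j / pj j) * Real.log (1/(q i * p i j / pj j)))
            + pj j * ((q i * p i j / pj j) * Real.log ((q i * p i j / pj j) / q i))
          = (pj j * (q i * p i j / pj j)) *
            (Real.log (1/(q i * p i j / pj j)) + Real.log ((q i * p i j / pj j) / q i)) := by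
            ring
        _ = q i * p i j * Real.log (1 / q i) := by rw [hpt, hlog]
  have hid : H q - ∑ j, pj j * H (pc j) = ∑ j, pj j * KL j := by
    have key : ∑ j, pj j * H (pc j) + ∑ j, pj j * KL j = H q := by
      simp only [hH, hKL_def, Finset.mul_sum]
      rw [← Finset.sum_add_distrib]
      simp only [← Finset.sum_add_distrib]
      rw [Finset.sum_comm]
      refine Finset.sum_congr rfl (fun i _ => ?_)
      rw [Finset.sum_congr rfl (fun j (_ : j ∈ Finset.univ) => hterm i j)]
      rw [← Finset.sum_mul, ← Finset.mul_sum, hp1 i, mul_one]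
    linarith
  -- ℓ¹ distance computation
  have habs : ∀ j, ∑ i, |pc j i - q i| = (∑ i, q i * |pj j - p i j|) / pj j := by
    intro j
    rw [Finset.sum_div]
    refine Finset.sum_congr rfl (fun i _ => ?_)
    have h1 : pc j i - q i = q i * (p i j - pj j) / pj j := by
      rw [hpc]; field_simp [(hpjpos j).ne']
    rw [h1, abs_div, abs_of_pos (hpjpos j), abs_mul, abs_of_nonneg (hq i), abs_sub_comm]
  -- per-j lower bound on pj * KL
  have hKLlb : ∀ j, (∑ i, q i * |pj j - p i j|)^2 / (2*(c/M)) ≤ pj j * KL j := by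
    intro j
    have hp' := pinsker (pc j) q (hpc_nonneg j) hq (hpc_sum j) hq1 (fun i => hpc_zero j i)
    rw [habs j, div_pow] at hp'
    have h1 : (∑ i, q i * |pj j - p i j|)^2 ≤ 2 * KL j * pj j^2 := by
      rw [div_le_iff₀ (pow_pos (hpjpos j) 2)] at hp'
      calc (∑ i, q i * |pj j - p i j|)^2 ≤ 2 * (∑ i, pc j i * Real.log (pc j i / q i)) * pj j ^2 := hp'
        _ = 2 * KL j * pj j ^ 2 := by rw [hKL_def]
    have h2 : (∑ i, q i * |pj j - p i j|)^2/(2*pj j) ≤ pj j * KL j := by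
      rw [div_le_iff₀ (by nlinarith [hpjpos j] : (0:ℝ) < 2*pj j)]
      nlinarith [h1]
    refine le_trans (div_le_div_of_nonneg_left (sq_nonneg _)
      (by nlinarith [hpjpos j]) (by nlinarith [hub j])) h2
  have hsum : (∑ j, (∑ i, q i * |pj j - p i j|)^2) / (2*(c/M)) ≤ ∑ j, pj j * KL j := by
    rw [Finset.sum_div]
    exact Finset.sum_le_sum (fun j _ => hKLlb j)
  have hcheb : (∑ j, ∑ i, q i * |pj j - p i j|)^2
      ≤ (M:ℝ) * ∑ j, (∑ i, q i * |pj j - p i j|)^2 := by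
    have := sq_sum_le_card_mul_sum_sq (s := (Finset.univ : Finset (Fin M)))
      (f := fun j => ∑ i, q i * |pj j - p i j|)
    simpa using this
  rw [hid]
  set T : ℝ := ∑ j, ∑ i, q i * |pj j - p i j| with hT_def
  set U : ℝ := ∑ j, (∑ i, q i * |pj j - p i j|)^2 with hU_def
  set Δ : ℝ := ∑ j, pj j * KL j with hΔ_def
  have hU : U ≤ Δ*(2*(c/M)) := (div_le_iff₀ (by positivity)).mp hsum
  have hMU : (M:ℝ)*U ≤ (M:ℝ)*(Δ*(2*(c/M))) := by
    exact mul_le_mul_of_nonneg_left hU hMpos.le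
  have hcm' : (M:ℝ)*(Δ*(2*(c/M))) = 2*Δ*c := by field_simp
  have hMJ : ((M:ℝ)*J)^2 = 4*T^2 := by rw [hJ]; field_simp; ring
  rw [div_mul_eq_mul_div, div_le_iff₀ (by positivity : (0:ℝ) < 8*c)]
  nlinarith [hMJ, hcheb, hMU, hcm']
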